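/- Let p ≥ 2 and let H = \bar{U}_q sl_2 be the restricted quantum group at a primitive 2p-th root of unity q, with PBW basis F^i E^m K^n (0 ≤ i,m ≤ p−1, 0 ≤ n ≤ 2p−1). The element c = (Σ_{m=1}^{2p} K^m) F^{p−1} E^{p−1} is a two-sided cointegral: x·c = ε(x)·c = c·x for all x ∈ H. In particular \bar{U}_q sl_2 is unimodular. -/

import Mathlib

section Aux

variable {k H : Type} [Field k] [Ring H] [Algebra k H]

private theorem aux_shift {H : Type} [AddCommGroup H] (g : ℕ → H) (n : ℕ) (h : g n = g 0) :
    ∑ m ∈ Finset.range n, g (m + 1) = ∑ m ∈ Finset.range n, g m := by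
  have h1 := Finset.sum_range_succ' g n
  rw [Finset.sum_range_succ g n, h] at h1
  exact (add_right_cancel h1).symm

private theorem aux_pow_right (s : k) (a b : H) (h : a * b = s • (b * a)) :
    ∀ n : ℕ, a * b ^ n = s ^ n • (b ^ n * a) := by
  intro n
  induction n with
  | zero => simp
  | succ n ih =>
    calc a * b ^ (n + 1) = (a * b ^ n) * b := by rw [pow_succ, mul_assoc]
      _ = s ^ n • (b ^ n * (a * b)) := by rw [ih, smul_mul_assoc, mul_assoc]
      _ = s ^ n • (b ^ n * (s • (b * a))) := by rw [h]
      _ = s ^ (n + 1) • (b ^ (n + 1) * a) := by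
          rw [mul_smul_comm, smul_smul, ← pow_succ, pow_succ b, mul_assoc]

private theorem aux_pow_left (s : k) (a b : H) (h : a * b = s • (b * a)) :
    ∀ n : ℕ, a ^ n * b = s ^ n • (b * a ^ n) := by
  intro n
  induction n with
  | zero => simp
  | succ n ih =>
    calc a ^ (n + 1) * b = a * (a ^ n * b) := by rw [pow_succ', mul_assoc]
      _ = s ^ n • ((a * b) * a ^ n) := by rw [ih, mul_smul_comm, mul_assoc]
      _ = s ^ n • ((s • (b * a)) * a ^ n) := by rw [h]
      _ = s ^ (n + 1) • (b * a ^ (n + 1)) := by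
          rw [smul_mul_assoc, smul_smul, ← pow_succ, pow_succ' a, mul_assoc]

private theorem aux_conj (s : k) (u v x : H)
    (huv : u * v = 1) (hvu : v * u = 1) (h : u * x = s • (x * u)) :
    x * v = s • (v * x) := by
  calc x * v = v * (u * x) * v := by rw [← mul_assoc, hvu, one_mul]
    _ = v * (s • (x * u)) * v := by rw [h]
    _ = s • (v * (x * (u * v))) := by
        rw [mul_smul_comm, smul_mul_assoc]; congr 1; simp [mul_assoc]
    _ = s • (v * x) := by rw [huv, mul_one]

private theorem aux_swap (s : k) (a b : H) (hs : s ≠ 0) (h : a * b = s • (b * a)) :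
    b * a = s⁻¹ • (a * b) := by
  rw [h, smul_smul, inv_mul_cancel₀ hs, one_smul]

private noncomputable def Wsum (p : ℕ) (K : H) (t : k) : H :=
  ∑ m ∈ Finset.range (2 * p), t ^ (m + 1) • K ^ (m + 1)

private theorem Wsum_one (p : ℕ) (K : H) :
    Wsum (k := k) p K 1 = ∑ m ∈ Finset.range (2 * p), K ^ (m + 1) := by
  simp [Wsum]

private theorem Wsum_mul_K (p : ℕ) (K : H) (t : k) (ht0 : t ≠ 0) (ht : t ^ (2 * p) = 1)
    (hK2p : K ^ (2 * p) = 1) :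
    Wsum p K t * K = t⁻¹ • Wsum p K t := by
  calc Wsum p K t * K
      = ∑ m ∈ Finset.range (2 * p), (t⁻¹ * t ^ (m + 1 + 1)) • K ^ (m + 1 + 1) := by
        rw [Wsum, Finset.sum_mul]
        refine Finset.sum_congr rfl fun m _ => ?_
        rw [smul_mul_assoc, ← pow_succ, pow_succ' t (m + 1), inv_mul_cancel_left₀ ht0]
    _ = ∑ m ∈ Finset.range (2 * p), (t⁻¹ * t ^ (m + 1)) • K ^ (m + 1) := by
        refine aux_shift (fun m => (t⁻¹ * t ^ (m + 1)) • K ^ (m + 1)) (2 * p) ?_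
        simp [pow_succ t (2 * p), pow_succ K (2 * p), ht, hK2p]
    _ = t⁻¹ • Wsum p K t := by
        rw [Wsum, Finset.smul_sum]
        exact Finset.sum_congr rfl fun m _ => (smul_smul _ _ _).symm

private theorem Wsum_mul_Kinv (p : ℕ) (K Kinv : H) (t : k) (ht : t ^ (2 * p) = 1)
    (hK2p : K ^ (2 * p) = 1) (hK : K * Kinv = 1) :
    Wsum p K t * Kinv = t • Wsum p K t := by
  calc Wsum p K t * Kinv
      = ∑ m ∈ Finset.range (2 * p), (t * t ^ m) • K ^ m := by
        rw [Wsum, Finset.sum_mul]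
        refine Finset.sum_congr rfl fun m _ => ?_
        rw [smul_mul_assoc, pow_succ K, mul_assoc, hK, mul_one, pow_succ' t]
    _ = ∑ m ∈ Finset.range (2 * p), (t * t ^ (m + 1)) • K ^ (m + 1) := by
        refine (aux_shift (fun m => (t * t ^ m) • K ^ m) (2 * p) ?_).symm
        simp [ht, hK2p]
    _ = t • Wsum p K t := by
        rw [Wsum, Finset.smul_sum]
        exact Finset.sum_congr rfl fun m _ => (smul_smul _ _ _).symm

private theorem Wsum_mul_right (p : ℕ) (K X : H) (t s : k)
    (h : ∀ n : ℕ, K ^ n * X = s ^ n • (X * K ^ n)) :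
    Wsum p K t * X = X * Wsum p K (t * s) := by
  rw [Wsum, Wsum, Finset.sum_mul, Finset.mul_sum]
  refine Finset.sum_congr rfl fun m _ => ?_
  rw [smul_mul_assoc, h (m + 1), smul_smul, ← mul_pow, mul_smul_comm]

private theorem Wsum_mul_left (p : ℕ) (K X : H) (t s : k)
    (h : ∀ n : ℕ, X * K ^ n = s ^ n • (K ^ n * X)) :
    X * Wsum p K t = Wsum p K (t * s) * X := by
  rw [Wsum, Wsum, Finset.sum_mul, Finset.mul_sum]
  refine Finset.sum_congr rfl fun m _ => ?_
  rw [mul_smul_comm, h (m + 1), smul_smul, ← mul_pow, smul_mul_assoc]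

private theorem Wsum_mul_pow_right (p : ℕ) (K X : H) (s : k)
    (h : ∀ n : ℕ, K ^ n * X = s ^ n • (X * K ^ n)) :
    ∀ (n : ℕ) (t : k), Wsum p K t * X ^ n = X ^ n * Wsum p K (t * s ^ n) := by
  intro n
  induction n with
  | zero => intro t; simp
  | succ n ih =>
    intro t
    calc Wsum p K t * X ^ (n + 1) = (Wsum p K t * X ^ n) * X := by rw [pow_succ, mul_assoc]
      _ = X ^ n * (Wsum p K (t * s ^ n) * X) := by rw [ih, mul_assoc]
      _ = X ^ n * (X * Wsum p K (t * s ^ n * s)) := by rw [Wsum_mul_right p K X _ s h]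
      _ = X ^ (n + 1) * Wsum p K (t * s ^ (n + 1)) := by
          rw [← mul_assoc, ← pow_succ, mul_assoc, ← pow_succ]

end Aux


open TensorProduct

/-- Theorem 7.3 in type `A₁` (Section 8): in the restricted quantum group `H = U̅_q sl₂` at a
primitive `2p`-th root of unity `q` — presented here as any Hopf algebra generated by elements
`E, F, K, K⁻¹` satisfying the defining relations of `U̅_q sl₂`, with the standard coalgebra
structure on the generators — the element
`c = (∑_{m=1}^{2p} K^m) F^{p-1} E^{p-1}` is a two-sided cointegral:
`x·c = ε(x)·c = c·x` for all `x ∈ H`.  In particular `U̅_q sl₂` is unimodular. -/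
theorem stmt19 (k H : Type) [Field k] [Ring H] [HopfAlgebra k H]
    (p : ℕ) (hp : 2 ≤ p)
    (q : k) (hq : q ^ (2 * p) = 1)
    (hqprim : ∀ m : ℕ, 0 < m → m < 2 * p → q ^ m ≠ 1)
    (E F K Kinv : H)
    (hK : K * Kinv = 1) (hK' : Kinv * K = 1)
    (hKE : K * E = q ^ 2 • (E * K))
    (hKF : K * F = (q⁻¹) ^ 2 • (F * K))
    (hEF : E * F - F * E = (q - q⁻¹)⁻¹ • (K - Kinv))
    (hEp : E ^ p = 0) (hFp : F ^ p = 0) (hK2p : K ^ (2 * p) = 1)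
    (hcomulE : Coalgebra.comul (R := k) E = (1 : H) ⊗ₜ[k] E + E ⊗ₜ[k] K)
    (hcomulF : Coalgebra.comul (R := k) F = Kinv ⊗ₜ[k] F + F ⊗ₜ[k] (1 : H))
    (hcomulK : Coalgebra.comul (R := k) K = K ⊗ₜ[k] K)
    (hcounitE : Coalgebra.counit (R := k) E = (0 : k))
    (hcounitF : Coalgebra.counit (R := k) F = (0 : k))
    (hcounitK : Coalgebra.counit (R := k) K = (1 : k))
    (hgen : Algebra.adjoin k {E, F, K, Kinv} = (⊤ : Subalgebra k H)) :
    (∀ x : H,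
      x * ((∑ m ∈ Finset.range (2 * p), K ^ (m + 1)) * F ^ (p - 1) * E ^ (p - 1)) =
        Coalgebra.counit (R := k) x •
          ((∑ m ∈ Finset.range (2 * p), K ^ (m + 1)) * F ^ (p - 1) * E ^ (p - 1))) ∧
    (∀ x : H,
      ((∑ m ∈ Finset.range (2 * p), K ^ (m + 1)) * F ^ (p - 1) * E ^ (p - 1)) * x =
        Coalgebra.counit (R := k) x •
          ((∑ m ∈ Finset.range (2 * p), K ^ (m + 1)) * F ^ (p - 1) * E ^ (p - 1))) := by
  classical
  -- scalar facts
  have hq0 : q ≠ 0 := by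
    intro h; rw [h, zero_pow (by omega)] at hq; exact zero_ne_one hq
  set s2 : k := q ^ 2 with hs2def
  have hs20 : s2 ≠ 0 := pow_ne_zero _ hq0
  have hs2i0 : s2⁻¹ ≠ 0 := inv_ne_zero hs20
  have hs2p : s2 ^ p = 1 := by rw [hs2def, ← pow_mul]; exact hq
  have hs2pp : s2 ^ (2 * p) = 1 := by
    rw [mul_comm 2 p, pow_mul, hs2p, one_pow]
  have hs2ipp : (s2⁻¹) ^ (2 * p) = 1 := by rw [inv_pow, hs2pp, inv_one]
  have hs21 : s2 ≠ 1 := hqprim 2 (by omega) (by omega)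
  have hs2i1 : s2⁻¹ ≠ 1 := by
    intro h; exact hs21 (by rw [← inv_inv s2, h, inv_one])
  have hs2p1 : s2 ^ (p - 1) = s2⁻¹ := by
    have h1 : s2 ^ (p - 1) * s2 = 1 := by
      rw [← pow_succ, Nat.sub_add_cancel (by omega), hs2p]
    field_simp at h1 ⊢
    rw [h1]
  have hs2ip1 : (s2⁻¹) ^ (p - 1) = s2 := by
    rw [inv_pow, hs2p1, inv_inv]
  -- geometric sums
  have hA : (∑ i ∈ Finset.range (p - 1), s2 ^ i) = -s2⁻¹ := by
    have h1 := geom_sum_mul s2 (p - 1)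
    rw [hs2p1] at h1
    have h2 : (-s2⁻¹) * (s2 - 1) = s2⁻¹ - 1 := by
      field_simp
      ring
    exact mul_right_cancel₀ (sub_ne_zero.mpr hs21) (h1.trans h2.symm)
  have hB : (∑ i ∈ Finset.range (p - 1), (s2⁻¹) ^ i) = -s2 := by
    have h1 := geom_sum_mul s2⁻¹ (p - 1)
    rw [hs2ip1] at h1
    have h2 : (-s2) * (s2⁻¹ - 1) = s2 - 1 := by
      field_simp; ring
    exact mul_right_cancel₀ (sub_ne_zero.mpr hs2i1) (h1.trans h2.symm)
  -- basic relations
  have hKF : K * F = s2⁻¹ • (F * K) := by rw [hKF, inv_pow]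
  have hEK : E * K = s2⁻¹ • (K * E) := aux_swap s2 K E hs20 hKE
  have hFK : F * K = s2 • (K * F) := by
    have := aux_swap s2⁻¹ K F hs2i0 hKF; rwa [inv_inv] at this
  have hEKi : E * Kinv = s2 • (Kinv * E) := aux_conj s2 K Kinv E hK hK' hKE
  have hKiE : Kinv * E = s2⁻¹ • (E * Kinv) := aux_swap s2 E Kinv hs20 hEKi
  have hFKi : F * Kinv = s2⁻¹ • (Kinv * F) := aux_conj s2⁻¹ K Kinv F hK hK' hKF
  have hKiF : Kinv * F = s2 • (F * Kinv) := by
    have := aux_swap s2⁻¹ F Kinv hs2i0 hFKi; rwa [inv_inv] at this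
  -- power commutation
  have hKnE : ∀ n : ℕ, K ^ n * E = s2 ^ n • (E * K ^ n) := aux_pow_left s2 K E hKE
  have hKnF : ∀ n : ℕ, K ^ n * F = (s2⁻¹) ^ n • (F * K ^ n) := aux_pow_left s2⁻¹ K F hKF
  have hEKn : ∀ n : ℕ, E * K ^ n = (s2⁻¹) ^ n • (K ^ n * E) := aux_pow_right s2⁻¹ E K hEK
  have hFKn : ∀ n : ℕ, F * K ^ n = s2 ^ n • (K ^ n * F) := aux_pow_right s2 F K hFK
  have hKEn : ∀ n : ℕ, K * E ^ n = s2 ^ n • (E ^ n * K) := aux_pow_right s2 K E hKE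
  have hKiEn : ∀ n : ℕ, Kinv * E ^ n = (s2⁻¹) ^ n • (E ^ n * Kinv) :=
    aux_pow_right s2⁻¹ Kinv E hKiE
  have hEnK : ∀ n : ℕ, E ^ n * K = (s2⁻¹) ^ n • (K * E ^ n) := aux_pow_left s2⁻¹ E K hEK
  have hFnK : ∀ n : ℕ, F ^ n * K = s2 ^ n • (K * F ^ n) := aux_pow_left s2 F K hFK
  have hEnKi : ∀ n : ℕ, E ^ n * Kinv = s2 ^ n • (Kinv * E ^ n) := aux_pow_left s2 E Kinv hEKi
  have hFnKi : ∀ n : ℕ, F ^ n * Kinv = (s2⁻¹) ^ n • (Kinv * F ^ n) :=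
    aux_pow_left s2⁻¹ F Kinv hFKi
  -- lambda and EF relation
  set lam : k := (q - q⁻¹)⁻¹ with hlamdef
  have hEF' : E * F = F * E + (lam • K - lam • Kinv) := by
    rw [← smul_sub, ← hEF]; abel
  -- commutator formulas
  have hEFn : ∀ n : ℕ, E * F ^ (n + 1) = F ^ (n + 1) * E +
      lam • ((∑ i ∈ Finset.range (n + 1), (s2⁻¹) ^ i) • (F ^ n * K)
           - (∑ i ∈ Finset.range (n + 1), s2 ^ i) • (F ^ n * Kinv)) := by
    intro n
    induction n with
    | zero =>
      simp only [zero_add, pow_one, pow_zero, Finset.sum_range_one, one_smul, one_mul]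
      rw [hEF', smul_sub]
    | succ n ih =>
      calc E * F ^ (n + 1 + 1)
          = (E * F ^ (n + 1)) * F := by rw [pow_succ, ← mul_assoc]
        _ = (F ^ (n + 1) * E) * F +
            lam • (((∑ i ∈ Finset.range (n + 1), (s2⁻¹) ^ i) • (F ^ n * K)) * F
                 - ((∑ i ∈ Finset.range (n + 1), s2 ^ i) • (F ^ n * Kinv)) * F) := by
            rw [ih, add_mul, smul_mul_assoc, sub_mul]
        _ = F ^ (n + 1) * (E * F) +
            lam • ((∑ i ∈ Finset.range (n + 1), (s2⁻¹) ^ i) • (F ^ n * (K * F))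
                 - (∑ i ∈ Finset.range (n + 1), s2 ^ i) • (F ^ n * (Kinv * F))) := by
            rw [mul_assoc, smul_mul_assoc, smul_mul_assoc, mul_assoc, mul_assoc]
        _ = F ^ (n + 1) * (F * E + (lam • K - lam • Kinv)) +
            lam • ((∑ i ∈ Finset.range (n + 1), (s2⁻¹) ^ i) • (F ^ n * (s2⁻¹ • (F * K)))
                 - (∑ i ∈ Finset.range (n + 1), s2 ^ i) • (F ^ n * (s2 • (F * Kinv)))) := by
            rw [hEF', hKF, hKiF]
        _ = F ^ (n + 1 + 1) * E +
            lam • ((∑ i ∈ Finset.range (n + 1 + 1), (s2⁻¹) ^ i) • (F ^ (n + 1) * K)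
                 - (∑ i ∈ Finset.range (n + 1 + 1), s2 ^ i) • (F ^ (n + 1) * Kinv)) := by
            rw [geom_sum_succ (x := s2⁻¹) (n := n + 1), geom_sum_succ (x := s2) (n := n + 1)]
            simp only [mul_add, mul_sub, mul_smul_comm, smul_smul, ← mul_assoc, ← pow_succ]
            module
  have hEnF : ∀ n : ℕ, E ^ (n + 1) * F = F * E ^ (n + 1) +
      lam • ((∑ i ∈ Finset.range (n + 1), s2 ^ i) • (E ^ n * K)
           - (∑ i ∈ Finset.range (n + 1), (s2⁻¹) ^ i) • (E ^ n * Kinv)) := by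
    intro n
    induction n with
    | zero =>
      simp only [zero_add, pow_one, pow_zero, Finset.sum_range_one, one_smul, one_mul]
      rw [hEF', smul_sub]
    | succ n ih =>
      calc E ^ (n + 1 + 1) * F
          = E * (E ^ (n + 1) * F) := by rw [pow_succ', mul_assoc]
        _ = E * (F * E ^ (n + 1)) +
            lam • ((∑ i ∈ Finset.range (n + 1), s2 ^ i) • (E * (E ^ n * K))
                 - (∑ i ∈ Finset.range (n + 1), (s2⁻¹) ^ i) • (E * (E ^ n * Kinv))) := by
            rw [ih, mul_add, mul_smul_comm, mul_sub, mul_smul_comm, mul_smul_comm]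
        _ = (E * F) * E ^ (n + 1) +
            lam • ((∑ i ∈ Finset.range (n + 1), s2 ^ i) • (E ^ (n + 1) * K)
                 - (∑ i ∈ Finset.range (n + 1), (s2⁻¹) ^ i) • (E ^ (n + 1) * Kinv)) := by
            simp only [← mul_assoc, ← pow_succ']
        _ = (F * E + (lam • K - lam • Kinv)) * E ^ (n + 1) +
            lam • ((∑ i ∈ Finset.range (n + 1), s2 ^ i) • (E ^ (n + 1) * K)
                 - (∑ i ∈ Finset.range (n + 1), (s2⁻¹) ^ i) • (E ^ (n + 1) * Kinv)) := by
            rw [hEF']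
        _ = F * E ^ (n + 1 + 1) +
            lam • ((∑ i ∈ Finset.range (n + 1 + 1), s2 ^ i) • (E ^ (n + 1) * K)
                 - (∑ i ∈ Finset.range (n + 1 + 1), (s2⁻¹) ^ i) • (E ^ (n + 1) * Kinv)) := by
            rw [Finset.sum_range_succ (fun i => s2 ^ i) (n + 1),
              Finset.sum_range_succ (fun i => (s2⁻¹) ^ i) (n + 1)]
            simp only [add_mul, sub_mul, smul_mul_assoc, mul_assoc, ← pow_succ']
            rw [hKEn (n + 1), hKiEn (n + 1)]
            module
  -- counit of Kinv
  have hcounitKi : Coalgebra.counit (R := k) Kinv = (1 : k) := by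
    have h := Bialgebra.counit_mul (R := k) K Kinv
    rw [hK, Bialgebra.counit_one, hcounitK, one_mul] at h
    exact h.symm
  -- set up N with p - 1 = N + 1
  obtain ⟨N, hN⟩ : ∃ N, p - 1 = N + 1 := ⟨p - 2, by omega⟩
  have hNp : N + 2 = p := by omega
  have hEN2 : E ^ (N + 1 + 1) = 0 := by rw [show N + 1 + 1 = p from by omega]; exact hEp
  have hFN2 : F ^ (N + 1 + 1) = 0 := by rw [show N + 1 + 1 = p from by omega]; exact hFp
  have hAN : (∑ i ∈ Finset.range (N + 1), s2 ^ i) = -s2⁻¹ := by rw [← hN]; exact hA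
  have hBN : (∑ i ∈ Finset.range (N + 1), (s2⁻¹) ^ i) = -s2 := by rw [← hN]; exact hB
  have hsiN : (s2⁻¹) ^ (N + 1) = s2 := by rw [← hN]; exact hs2ip1
  have hsN : s2 ^ (N + 1) = s2⁻¹ := by rw [← hN]; exact hs2p1
  -- Wsum commutation facts
  have hKW : ∀ t : k, K * Wsum p K t = Wsum p K t * K := by
    intro t
    have h := Wsum_mul_left p K K t 1 (fun n => by
      rw [one_pow, one_smul, ← pow_succ, ← pow_succ'])
    rw [mul_one] at h
    exact h
  have hcommKi : Commute Kinv K := hK'.trans hK.symm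
  have hKiW : ∀ t : k, Kinv * Wsum p K t = Wsum p K t * Kinv := by
    intro t
    have h := Wsum_mul_left p K Kinv t 1 (fun n => by
      rw [one_pow, one_smul]; exact hcommKi.pow_right n)
    rw [mul_one] at h
    exact h
  have hW1K : Wsum p K (1 : k) * K = Wsum p K (1 : k) := by
    have h := Wsum_mul_K p K (1 : k) one_ne_zero (one_pow _) hK2p
    rwa [inv_one, one_smul] at h
  have hW1Ki : Wsum p K (1 : k) * Kinv = Wsum p K (1 : k) := by
    have h := Wsum_mul_Kinv p K Kinv (1 : k) (one_pow _) hK2p hK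
    rwa [one_smul] at h
  have hWsiK : Wsum p K s2⁻¹ * K = s2 • Wsum p K s2⁻¹ := by
    have h := Wsum_mul_K p K s2⁻¹ hs2i0 hs2ipp hK2p
    rwa [inv_inv] at h
  have hWsiKi : Wsum p K s2⁻¹ * Kinv = s2⁻¹ • Wsum p K s2⁻¹ :=
    Wsum_mul_Kinv p K Kinv s2⁻¹ hs2ipp hK2p hK
  have hWs2K : Wsum p K s2 * K = s2⁻¹ • Wsum p K s2 :=
    Wsum_mul_K p K s2 hs20 hs2pp hK2p
  have hWs2Ki : Wsum p K s2 * Kinv = s2 • Wsum p K s2 :=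
    Wsum_mul_Kinv p K Kinv s2 hs2pp hK2p hK
  have hEW1 : E * Wsum p K (1 : k) = Wsum p K s2⁻¹ * E := by
    have h := Wsum_mul_left p K E 1 s2⁻¹ hEKn
    rwa [one_mul] at h
  have hFW1 : F * Wsum p K (1 : k) = Wsum p K s2 * F := by
    have h := Wsum_mul_left p K F 1 s2 hFKn
    rwa [one_mul] at h
  have hW1Fn : Wsum p K (1 : k) * F ^ (N + 1) = F ^ (N + 1) * Wsum p K s2 := by
    have h := Wsum_mul_pow_right p K F s2⁻¹ hKnF (N + 1) 1
    rwa [one_mul, hsiN] at h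
  have hWs2En : Wsum p K s2 * E ^ N = E ^ N * Wsum p K s2⁻¹ := by
    have h := Wsum_mul_pow_right p K E s2 hKnE N s2
    rwa [← pow_succ', hsN] at h
  have hWsiFn : Wsum p K s2⁻¹ * F ^ N = F ^ N * Wsum p K s2 := by
    have h := Wsum_mul_pow_right p K F s2⁻¹ hKnF N s2⁻¹
    rwa [← pow_succ', hsiN] at h
  -- rewrite the goal
  rw [show (∑ m ∈ Finset.range (2 * p), K ^ (m + 1)) = Wsum (k := k) p K 1
      from (Wsum_one (k := k) p K).symm, hN]
  set c : H := Wsum p K (1 : k) * F ^ (N + 1) * E ^ (N + 1) with hc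
  -- the six generator computations
  have hKc : K * c = c := by
    rw [hc, ← mul_assoc, ← mul_assoc, hKW, hW1K]
  have hKic : Kinv * c = c := by
    rw [hc, ← mul_assoc, ← mul_assoc, hKiW, hW1Ki]
  have hcE : c * E = 0 := by
    rw [hc, mul_assoc, ← pow_succ, hEN2, mul_zero]
  have hFc : F * c = 0 := by
    rw [hc, ← mul_assoc, ← mul_assoc, hFW1, mul_assoc (Wsum p K s2) F (F ^ (N + 1)),
      ← pow_succ', hFN2, mul_zero, zero_mul]
  have hcK : c * K = c := by
    rw [hc]
    calc Wsum p K (1 : k) * F ^ (N + 1) * E ^ (N + 1) * K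
        = Wsum p K (1 : k) * F ^ (N + 1) * (E ^ (N + 1) * K) := by rw [mul_assoc]
      _ = (s2⁻¹) ^ (N + 1) • (Wsum p K (1 : k) * F ^ (N + 1) * K * E ^ (N + 1)) := by
          rw [hEnK (N + 1), mul_smul_comm, ← mul_assoc]
      _ = (s2⁻¹) ^ (N + 1) • (Wsum p K (1 : k) * (s2 ^ (N + 1) • (K * F ^ (N + 1))) * E ^ (N + 1)) := by
          rw [mul_assoc (Wsum p K (1 : k)) (F ^ (N + 1)) K, hFnK (N + 1)]
      _ = ((s2⁻¹) ^ (N + 1) * s2 ^ (N + 1)) • (Wsum p K (1 : k) * K * F ^ (N + 1) * E ^ (N + 1)) := by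
          rw [mul_smul_comm, smul_mul_assoc, smul_smul, ← mul_assoc]
      _ = Wsum p K (1 : k) * F ^ (N + 1) * E ^ (N + 1) := by
          rw [hW1K, show (s2⁻¹) ^ (N + 1) * s2 ^ (N + 1) = (1 : k) from by
            rw [← mul_pow, inv_mul_cancel₀ hs20, one_pow], one_smul]
  have hcKi : c * Kinv = c := by
    rw [hc]
    calc Wsum p K (1 : k) * F ^ (N + 1) * E ^ (N + 1) * Kinv
        = Wsum p K (1 : k) * F ^ (N + 1) * (E ^ (N + 1) * Kinv) := by rw [mul_assoc]
      _ = s2 ^ (N + 1) • (Wsum p K (1 : k) * F ^ (N + 1) * Kinv * E ^ (N + 1)) := by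
          rw [hEnKi (N + 1), mul_smul_comm, ← mul_assoc]
      _ = s2 ^ (N + 1) •
          (Wsum p K (1 : k) * ((s2⁻¹) ^ (N + 1) • (Kinv * F ^ (N + 1))) * E ^ (N + 1)) := by
          rw [mul_assoc (Wsum p K (1 : k)) (F ^ (N + 1)) Kinv, hFnKi (N + 1)]
      _ = (s2 ^ (N + 1) * (s2⁻¹) ^ (N + 1)) •
          (Wsum p K (1 : k) * Kinv * F ^ (N + 1) * E ^ (N + 1)) := by
          rw [mul_smul_comm, smul_mul_assoc, smul_smul, ← mul_assoc]
      _ = Wsum p K (1 : k) * F ^ (N + 1) * E ^ (N + 1) := by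
          rw [hW1Ki, show s2 ^ (N + 1) * (s2⁻¹) ^ (N + 1) = (1 : k) from by
            rw [← mul_pow, mul_inv_cancel₀ hs20, one_pow], one_smul]
  have hEc : E * c = 0 := by
    have hT1 : Wsum p K s2⁻¹ * (F ^ N * K) * E ^ (N + 1)
        = s2⁻¹ • (F ^ N * Wsum p K s2 * E ^ (N + 1)) := by
      calc Wsum p K s2⁻¹ * (F ^ N * K) * E ^ (N + 1)
          = Wsum p K s2⁻¹ * F ^ N * K * E ^ (N + 1) := by rw [← mul_assoc]
        _ = F ^ N * Wsum p K s2 * K * E ^ (N + 1) := by rw [hWsiFn]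
        _ = F ^ N * (Wsum p K s2 * K) * E ^ (N + 1) := by
            rw [mul_assoc (F ^ N) (Wsum p K s2) K]
        _ = s2⁻¹ • (F ^ N * Wsum p K s2 * E ^ (N + 1)) := by
            rw [hWs2K, mul_smul_comm, smul_mul_assoc]
    have hT2 : Wsum p K s2⁻¹ * (F ^ N * Kinv) * E ^ (N + 1)
        = s2 • (F ^ N * Wsum p K s2 * E ^ (N + 1)) := by
      calc Wsum p K s2⁻¹ * (F ^ N * Kinv) * E ^ (N + 1)
          = Wsum p K s2⁻¹ * F ^ N * Kinv * E ^ (N + 1) := by rw [← mul_assoc]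
        _ = F ^ N * Wsum p K s2 * Kinv * E ^ (N + 1) := by rw [hWsiFn]
        _ = F ^ N * (Wsum p K s2 * Kinv) * E ^ (N + 1) := by
            rw [mul_assoc (F ^ N) (Wsum p K s2) Kinv]
        _ = s2 • (F ^ N * Wsum p K s2 * E ^ (N + 1)) := by
            rw [hWs2Ki, mul_smul_comm, smul_mul_assoc]
    rw [hc]
    calc E * (Wsum p K (1 : k) * F ^ (N + 1) * E ^ (N + 1))
        = E * Wsum p K (1 : k) * F ^ (N + 1) * E ^ (N + 1) := by
          rw [← mul_assoc, ← mul_assoc]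
      _ = Wsum p K s2⁻¹ * (E * F ^ (N + 1)) * E ^ (N + 1) := by
          rw [hEW1, mul_assoc (Wsum p K s2⁻¹) E (F ^ (N + 1))]
      _ = Wsum p K s2⁻¹ * (F ^ (N + 1) * E +
            lam • ((-s2) • (F ^ N * K) - (-s2⁻¹) • (F ^ N * Kinv))) * E ^ (N + 1) := by
          rw [hEFn N, hBN, hAN]
      _ = Wsum p K s2⁻¹ * F ^ (N + 1) * (E * E ^ (N + 1)) +
          lam • ((-s2) • (Wsum p K s2⁻¹ * (F ^ N * K) * E ^ (N + 1)) -
                 (-s2⁻¹) • (Wsum p K s2⁻¹ * (F ^ N * Kinv) * E ^ (N + 1))) := by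
          simp only [mul_add, add_mul, mul_sub, sub_mul, mul_smul_comm, smul_mul_assoc,
            mul_assoc]
      _ = 0 := by
          rw [← pow_succ', hEN2, mul_zero, zero_add, hT1, hT2, smul_smul, smul_smul,
            show -s2 * s2⁻¹ = (-1 : k) from by field_simp,
            show -s2⁻¹ * s2 = (-1 : k) from by field_simp,
            sub_self, smul_zero]
  have hcF : c * F = 0 := by
    have hT3 : Wsum p K (1 : k) * F ^ (N + 1) * (E ^ N * K)
        = s2 • (F ^ (N + 1) * E ^ N * Wsum p K s2⁻¹) := by
      calc Wsum p K (1 : k) * F ^ (N + 1) * (E ^ N * K)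
          = F ^ (N + 1) * Wsum p K s2 * (E ^ N * K) := by rw [hW1Fn]
        _ = F ^ (N + 1) * (Wsum p K s2 * E ^ N) * K := by
            rw [mul_assoc (F ^ (N + 1)) (Wsum p K s2), ← mul_assoc (Wsum p K s2) (E ^ N) K,
              ← mul_assoc]
        _ = F ^ (N + 1) * E ^ N * (Wsum p K s2⁻¹ * K) := by
            rw [hWs2En, ← mul_assoc, mul_assoc (F ^ (N + 1) * E ^ N)]
        _ = s2 • (F ^ (N + 1) * E ^ N * Wsum p K s2⁻¹) := by
            rw [hWsiK, mul_smul_comm]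
    have hT4 : Wsum p K (1 : k) * F ^ (N + 1) * (E ^ N * Kinv)
        = s2⁻¹ • (F ^ (N + 1) * E ^ N * Wsum p K s2⁻¹) := by
      calc Wsum p K (1 : k) * F ^ (N + 1) * (E ^ N * Kinv)
          = F ^ (N + 1) * Wsum p K s2 * (E ^ N * Kinv) := by rw [hW1Fn]
        _ = F ^ (N + 1) * (Wsum p K s2 * E ^ N) * Kinv := by
            rw [mul_assoc (F ^ (N + 1)) (Wsum p K s2), ← mul_assoc (Wsum p K s2) (E ^ N) Kinv,
              ← mul_assoc]
        _ = F ^ (N + 1) * E ^ N * (Wsum p K s2⁻¹ * Kinv) := by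
            rw [hWs2En, ← mul_assoc, mul_assoc (F ^ (N + 1) * E ^ N)]
        _ = s2⁻¹ • (F ^ (N + 1) * E ^ N * Wsum p K s2⁻¹) := by
            rw [hWsiKi, mul_smul_comm]
    rw [hc]
    calc Wsum p K (1 : k) * F ^ (N + 1) * E ^ (N + 1) * F
        = Wsum p K (1 : k) * F ^ (N + 1) * (E ^ (N + 1) * F) := by rw [mul_assoc]
      _ = Wsum p K (1 : k) * F ^ (N + 1) * (F * E ^ (N + 1) +
            lam • ((-s2⁻¹) • (E ^ N * K) - (-s2) • (E ^ N * Kinv))) := by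
          rw [hEnF N, hAN, hBN]
      _ = Wsum p K (1 : k) * (F ^ (N + 1) * F) * E ^ (N + 1) +
          lam • ((-s2⁻¹) • (Wsum p K (1 : k) * F ^ (N + 1) * (E ^ N * K)) -
                 (-s2) • (Wsum p K (1 : k) * F ^ (N + 1) * (E ^ N * Kinv))) := by
          simp only [mul_add, add_mul, mul_sub, sub_mul, mul_smul_comm, smul_mul_assoc,
            mul_assoc]
      _ = 0 := by
          rw [← pow_succ, hFN2, mul_zero, zero_mul, zero_add, hT3, hT4, smul_smul, smul_smul,
            show -s2⁻¹ * s2 = (-1 : k) from by field_simp,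
            show -s2 * s2⁻¹ = (-1 : k) from by field_simp,
            sub_self, smul_zero]
  -- induction over the generating set
  have main : ∀ x : H, x * c = Coalgebra.counit (R := k) x • c ∧
      c * x = Coalgebra.counit (R := k) x • c := by
    intro x
    have hx : x ∈ Algebra.adjoin k ({E, F, K, Kinv} : Set H) := by rw [hgen]; exact Algebra.mem_top
    refine Algebra.adjoin_induction
      (p := fun y _ => y * c = Coalgebra.counit (R := k) y • c ∧
        c * y = Coalgebra.counit (R := k) y • c) ?_ ?_ ?_ ?_ hx
    · intro y hy
      simp only [Set.mem_insert_iff, Set.mem_singleton_iff] at hy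
      rcases hy with rfl | rfl | rfl | rfl
      · rw [hcounitE, zero_smul]; exact ⟨hEc, hcE⟩
      · rw [hcounitF, zero_smul]; exact ⟨hFc, hcF⟩
      · rw [hcounitK, one_smul]; exact ⟨hKc, hcK⟩
      · rw [hcounitKi, one_smul]; exact ⟨hKic, hcKi⟩
    · intro r
      rw [Bialgebra.counit_algebraMap]
      exact ⟨(Algebra.smul_def r c).symm,
        (Algebra.commutes r c).symm.trans (Algebra.smul_def r c).symm⟩
    · intro y z hy hz ihy ihz
      constructor
      · rw [add_mul, ihy.1, ihz.1, map_add, add_smul]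
      · rw [mul_add, ihy.2, ihz.2, map_add, add_smul]
    · intro y z hy hz ihy ihz
      constructor
      · rw [Bialgebra.counit_mul, mul_assoc, ihz.1, mul_smul_comm, ihy.1, smul_smul,
          mul_comm (Coalgebra.counit (R := k) z)]
      · rw [Bialgebra.counit_mul, ← mul_assoc, ihy.2, smul_mul_assoc, ihz.2, smul_smul]
  exact ⟨fun x => (main x).1, fun x => (main x).2⟩
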